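/- Let S be a p-adically complete ring and g ∈ S a nonzerodivisor such that S/gS is p-torsion free. Then S/gS is p-adically separated, i.e., ⋂ₙ (gS + pⁿS) = gS. -/

import Mathlib

private lemma key_lemma (p : ℕ) (S : Type*) [CommRing S] (g : S)
    (hg : g ∈ nonZeroDivisors S)
    (htf : ∀ h : S, (p : S) * h ∈ Ideal.span {g} → h ∈ Ideal.span {g}) :
    ∀ n : ℕ, ∀ a : S, g * a ∈ Ideal.span {(p : S) ^ n} → a ∈ Ideal.span {(p : S) ^ n} := by
  intro n
  induction n with
  | zero => intro a _; simp [Ideal.mem_span_singleton]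
  | succ n ih =>
    intro a ha
    rw [Ideal.mem_span_singleton] at ha
    obtain ⟨c, hc⟩ := ha
    have h1 : (p : S) * ((p : S) ^ n * c) ∈ Ideal.span {g} := by
      rw [Ideal.mem_span_singleton]
      exact ⟨a, by linear_combination -hc⟩
    obtain ⟨d, hd⟩ := Ideal.mem_span_singleton.mp (htf _ h1)
    have hgd : g * d ∈ Ideal.span {(p : S) ^ n} := by
      rw [Ideal.mem_span_singleton]; exact ⟨c, hd.symm⟩
    obtain ⟨e, he⟩ := Ideal.mem_span_singleton.mp (ih d hgd)
    have hapd : a = (p : S) * d := by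
      have : g * (a - (p : S) * d) = 0 := by
        linear_combination hc + (p:S) * hd
      rw [mul_comm] at this
      exact sub_eq_zero.mp ((mem_nonZeroDivisors_iff.mp hg).2 _ this)
    rw [Ideal.mem_span_singleton]
    exact ⟨e, by rw [hapd, he, pow_succ]; ring⟩

/-- If `S` is `p`-adically complete, `g` is a nonzerodivisor and `S/gS`
is `p`-torsion free, then `S/gS` is `p`-adically separated: `⋂ₙ (gS + pⁿS) = gS`. -/
theorem stmt5 (p : ℕ) [Fact p.Prime] (S : Type*) [CommRing S]
    [IsAdicComplete (Ideal.span {(p : S)}) S] (g : S)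
    (hg : g ∈ nonZeroDivisors S)
    (htf : ∀ h : S, (p : S) * h ∈ Ideal.span {g} → h ∈ Ideal.span {g}) :
    (⨅ n : ℕ, (Ideal.span {g} + Ideal.span {(p : S) ^ n})) = Ideal.span {g} := by
  apply le_antisymm
  · intro x hx
    simp only [Ideal.mem_iInf] at hx
    -- choose decompositions
    have hdec : ∀ n : ℕ, ∃ a b : S, x = g * a + (p : S) ^ n * b := by
      intro n
      obtain ⟨y, hy, z, hz, hyz⟩ := Submodule.mem_sup.mp (hx n)
      obtain ⟨a, ha⟩ := Ideal.mem_span_singleton.mp hy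
      obtain ⟨b, hb⟩ := Ideal.mem_span_singleton.mp hz
      exact ⟨a, b, by rw [← hyz, ha, hb]⟩
    choose a b hab using hdec
    have key := key_lemma p S g hg htf
    -- Cauchy condition
    have hcau : ∀ {m n : ℕ}, m ≤ n →
        a m ≡ a n [SMOD ((Ideal.span {(p : S)}) ^ m • ⊤ : Submodule S S)] := by
      intro m n hmn
      rw [Ideal.smul_top_eq_map]
      have : ((Ideal.span {(p : S)}) ^ m).map (RingHom.id S) = Ideal.span {(p:S)^m} := by
        simp [Ideal.map_id, Ideal.span_singleton_pow]
      rw [SModEq.sub_mem]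
      have : a m - a n ∈ Ideal.span {(p : S) ^ m} := by
        apply key m
        have : g * (a m - a n) = (p:S)^n * b n - (p:S)^m * b m := by
          have h1 := hab m; have h2 := hab n
          have : g * a m + (p:S)^m * b m = g * a n + (p:S)^n * b n := by rw [← h1, ← h2]
          linear_combination this
        rw [this, Ideal.mem_span_singleton]
        obtain ⟨k, hk⟩ := Nat.exists_eq_add_of_le hmn
        exact ⟨(p:S)^k * b n - b m, by rw [hk, pow_add]; ring⟩
      simpa [Ideal.smul_top_eq_map, Ideal.map_id, Ideal.span_singleton_pow,
        Submodule.restrictScalars_self] using this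
    obtain ⟨L, hL⟩ := IsPrecomplete.prec
      (IsAdicComplete.toIsPrecomplete (I := Ideal.span {(p : S)}) (M := S)) @hcau
    have hxL : x = g * L := by
      have hzero : x - g * L = 0 := by
        apply IsHausdorff.haus (IsAdicComplete.toIsHausdorff (I := Ideal.span {(p : S)}) (M := S)) (x - g * L)
        intro n
        rw [SModEq.zero]
        have h1 : a n - L ∈ Ideal.span {(p:S)^n} := by
          have := (hL n)
          rw [SModEq.sub_mem] at this
          simpa [Ideal.smul_top_eq_map, Ideal.map_id, Ideal.span_singleton_pow,
            Submodule.restrictScalars_self] using this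
        have : x - g * L ∈ Ideal.span {(p:S)^n} := by
          have heq : x - g * L = g * (a n - L) + (p:S)^n * b n := by
            have := hab n; linear_combination this
          rw [heq]
          exact Ideal.add_mem _ (Ideal.mul_mem_left _ g h1)
            (Ideal.mem_span_singleton.mpr ⟨b n, rfl⟩)
        simpa [Ideal.smul_top_eq_map, Ideal.map_id, Ideal.span_singleton_pow,
          Submodule.restrictScalars_self] using this
      exact sub_eq_zero.mp hzero
    rw [hxL, Ideal.mem_span_singleton]
    exact ⟨L, rfl⟩
  · exact le_iInf fun n => le_sup_left
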